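/- For any λ > 0, x > 1 and y ≥ x, f_λ(x,y) ≤ (1/λ)[((x-1)/(y-1))^{λ/r} - ((x-1)/y)^{λ/r}]. -/
import Mathlib


theorem stmt_2 (r : ℝ) (hr : 0 < r) (lam : ℝ) (hlam : 0 < lam)
    (x y : ℝ) (hx : 1 < x) (hy : x ≤ y) :
    ((x - 1) ^ (lam / r) / r) *
      ∫ u in (0:ℝ)..(min (y / x) 1), u ^ (lam / r) * (y - u) ^ (-(lam / r) - 1)
      ≤ (1 / lam) * (((x - 1) / (y - 1)) ^ (lam / r) - ((x - 1) / y) ^ (lam / r)) := by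
  have hc : 0 < lam / r := div_pos hlam hr
  have hx0 : (0:ℝ) < x := lt_trans one_pos hx
  have hy1 : (1:ℝ) < y := lt_of_lt_of_le hx hy
  have hmin : min (y / x) 1 = 1 := min_eq_right ((one_le_div hx0).mpr hy)
  rw [hmin]
  set c := lam / r with hcdef
  have hcont2 : ContinuousOn (fun u : ℝ => (y - u) ^ (-c - 1)) (Set.uIcc (0:ℝ) 1) := by
    apply ContinuousOn.rpow_const
    · exact (continuous_const.sub continuous_id).continuousOn
    · intro u hu
      rw [Set.uIcc_of_le zero_le_one] at hu
      left
      have : 0 < y - u := by nlinarith [hu.2]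
      exact ne_of_gt this
  have key : ∫ u in (0:ℝ)..1, u ^ c * (y - u) ^ (-c - 1)
      ≤ ∫ u in (0:ℝ)..1, (y - u) ^ (-c - 1) := by
    apply intervalIntegral.integral_mono_on zero_le_one
    · apply ContinuousOn.intervalIntegrable
      exact ((continuous_id.rpow_const fun u => Or.inr hc.le).continuousOn).mul hcont2
    · exact hcont2.intervalIntegrable
    · intro u hu
      have h0 : 0 ≤ u := hu.1
      have h1 : u ≤ 1 := hu.2
      have hyu : (0:ℝ) < y - u := by nlinarith
      calc u ^ c * (y - u) ^ (-c - 1) ≤ 1 * (y - u) ^ (-c - 1) := by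
            apply mul_le_mul_of_nonneg_right _ (Real.rpow_nonneg hyu.le _)
            exact Real.rpow_le_one h0 h1 hc.le
        _ = (y - u) ^ (-c - 1) := one_mul _
  have hval : (∫ u in (0:ℝ)..1, (y - u) ^ (-c - 1))
      = ((y - 1) ^ (-c) - y ^ (-c)) / c := by
    have h1 := intervalIntegral.integral_comp_sub_left (a := (0:ℝ)) (b := 1)
      (fun t : ℝ => t ^ (-c - 1)) y
    simp only [sub_zero] at h1
    rw [h1]
    rw [integral_rpow (Or.inr ⟨by intro h; nlinarith [hc], by
      rw [Set.uIcc_of_le (by linarith : y - 1 ≤ y)]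
      intro h
      exact absurd h.1 (by linarith)⟩)]
    have he : (-c - 1) + 1 = -c := by ring
    rw [he, div_neg, ← neg_div, neg_sub]
  have hA : (0:ℝ) ≤ (x - 1) ^ c / r := div_nonneg (Real.rpow_nonneg (by linarith) _) hr.le
  have step := mul_le_mul_of_nonneg_left key hA
  refine le_trans step ?_
  rw [hval]
  have hxm : (0:ℝ) ≤ x - 1 := by linarith
  have hym : (0:ℝ) < y - 1 := by linarith
  rw [Real.div_rpow hxm hym.le, Real.div_rpow hxm (by linarith : (0:ℝ) ≤ y)]
  rw [Real.rpow_neg hym.le, Real.rpow_neg (by linarith : (0:ℝ) ≤ y)]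
  have hlamrc : lam = r * c := by
    rw [hcdef]; field_simp
  have hyc : (0:ℝ) < (y - 1) ^ c := Real.rpow_pos_of_pos hym _
  have hyc2 : (0:ℝ) < y ^ c := Real.rpow_pos_of_pos (by linarith) _
  rw [hlamrc]
  rw [div_sub_div _ _ (ne_of_gt hyc) (ne_of_gt hyc2)]
  field_simp
  ring_nf
  apply le_of_eq
  ring
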